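/- arXiv:2004.01299 — 2 statements merged into one kernel-verified Lean document; each statement's English description precedes it below -/
import Mathlib

section
/- Under the monotonicity assumption (there exists Ω ∈ M_k such that (F ∩ Ω) ⊆ (F' ∩ Ω) implies s(F) ≤ s(F') for all F, F' ∈ M_k), for every f ∈ Ω and g ∉ Ω the inclusion values satisfy IV(f) ≥ IV(g), where IV(h) = (∑_{σ ∈ M_k, h ∈ σ} s(σ)) / C(d-1, k-1). -/
/-- Under monotonicity, elements of the dominant set Ω have inclusion value at
least as large as elements outside Ω. -/
theorem inclusion_value_dominant (d k : ℕ) (hk : 1 ≤ k) (hkd : k < d)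
    (s : Finset (Fin d) → ℝ) (Ω : Finset (Fin d))
    (hΩ : Ω ∈ Finset.powersetCard k (Finset.univ : Finset (Fin d)))
    (mono : ∀ F ∈ Finset.powersetCard k (Finset.univ : Finset (Fin d)),
      ∀ F' ∈ Finset.powersetCard k (Finset.univ : Finset (Fin d)),
        F ∩ Ω ⊆ F' ∩ Ω → s F ≤ s F')
    (IV : Fin d → ℝ)
    (hIV : ∀ h : Fin d, IV h =
      (∑ σ ∈ (Finset.powersetCard k (Finset.univ : Finset (Fin d))).filter
          (fun σ => h ∈ σ), s σ) / ((d - 1).choose (k - 1)))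
    (f g : Fin d) (hf : f ∈ Ω) (hg : g ∉ Ω) :
    IV g ≤ IV f := by
  have hfg : f ≠ g := fun h => hg (h ▸ hf)
  rw [hIV f, hIV g]
  have hden : (0:ℝ) < ((d - 1).choose (k - 1) : ℝ) := by
    have : k - 1 ≤ d - 1 := by omega
    exact_mod_cast Nat.choose_pos this
  apply div_le_div_of_nonneg_right _ hden.le
  set P := Finset.powersetCard k (Finset.univ : Finset (Fin d)) with hP
  have hcard : ∀ σ ∈ P, σ.card = k := by
    intro σ hσ
    exact (Finset.mem_powersetCard.mp hσ).2
  have hmemP : ∀ σ : Finset (Fin d), σ.card = k → σ ∈ P := by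
    intro σ h
    exact Finset.mem_powersetCard.mpr ⟨Finset.subset_univ σ, h⟩
  -- split both sums by membership of the other element
  have hsplitg : P.filter (fun σ => g ∈ σ) =
      (P.filter (fun σ => g ∈ σ ∧ f ∈ σ)) ∪ (P.filter (fun σ => g ∈ σ ∧ f ∉ σ)) := by
    rw [← Finset.filter_or]
    apply Finset.filter_congr
    intro σ _
    tauto
  have hsplitf : P.filter (fun σ => f ∈ σ) =
      (P.filter (fun σ => g ∈ σ ∧ f ∈ σ)) ∪ (P.filter (fun σ => g ∉ σ ∧ f ∈ σ)) := by
    rw [← Finset.filter_or]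
    apply Finset.filter_congr
    intro σ _
    tauto
  have hdisj1 : Disjoint (P.filter (fun σ => g ∈ σ ∧ f ∈ σ))
      (P.filter (fun σ => g ∈ σ ∧ f ∉ σ)) := by
    apply Finset.disjoint_filter_filter'
    rw [disjoint_iff_inf_le]
    intro σ hσ
    simp only [Pi.inf_apply] at hσ
    exact absurd hσ.1.2 hσ.2.2
  have hdisj2 : Disjoint (P.filter (fun σ => g ∈ σ ∧ f ∈ σ))
      (P.filter (fun σ => g ∉ σ ∧ f ∈ σ)) := by
    apply Finset.disjoint_filter_filter'
    rw [disjoint_iff_inf_le]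
    intro σ hσ
    simp only [Pi.inf_apply] at hσ
    exact absurd hσ.1.1 hσ.2.1
  rw [hsplitg, hsplitf, Finset.sum_union hdisj1, Finset.sum_union hdisj2]
  apply add_le_add le_rfl
  -- key step: swap bijection
  rw [show (∑ σ ∈ P.filter (fun σ => g ∉ σ ∧ f ∈ σ), s σ)
      = ∑ σ ∈ P.filter (fun σ => g ∈ σ ∧ f ∉ σ), s (insert f (σ.erase g)) from ?_]
  · apply Finset.sum_le_sum
    intro σ hσ
    simp only [Finset.mem_filter] at hσ
    obtain ⟨hσP, hgσ, hfσ⟩ := hσ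
    apply mono σ hσP
    · apply hmemP
      rw [Finset.card_insert_of_notMem (by simp [hfσ, hfg]),
          Finset.card_erase_of_mem hgσ, hcard σ hσP]
      omega
    · intro x hx
      simp only [Finset.mem_inter] at hx ⊢
      refine ⟨Finset.mem_insert.mpr (Or.inr ?_), hx.2⟩
      exact Finset.mem_erase.mpr ⟨fun h => hg (h ▸ hx.2), hx.1⟩
  · apply Finset.sum_nbij' (fun σ => insert g (σ.erase f)) (fun σ => insert f (σ.erase g))
    · intro σ hσ
      simp only [Finset.mem_filter] at hσ ⊢
      obtain ⟨hσP, hgσ, hfσ⟩ := hσ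
      refine ⟨hmemP _ ?_, Finset.mem_insert_self _ _, ?_⟩
      · rw [Finset.card_insert_of_notMem (by simp [hgσ, hfg.symm]),
            Finset.card_erase_of_mem hfσ, hcard σ hσP]; omega
      · simp [hfg, hgσ]
    · intro σ hσ
      simp only [Finset.mem_filter] at hσ ⊢
      obtain ⟨hσP, hgσ, hfσ⟩ := hσ
      refine ⟨hmemP _ ?_, ?_, Finset.mem_insert_self _ _⟩
      · rw [Finset.card_insert_of_notMem (by simp [hfσ, hfg]),
            Finset.card_erase_of_mem hgσ, hcard σ hσP]; omega
      · simp [hfg.symm, hfσ]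
    · intro σ hσ
      simp only [Finset.mem_filter] at hσ
      obtain ⟨_, hgσ, hfσ⟩ := hσ
      rw [Finset.erase_insert (by simp [hgσ, hfg.symm]), Finset.insert_erase hfσ]
    · intro σ hσ
      simp only [Finset.mem_filter] at hσ
      obtain ⟨_, hgσ, hfσ⟩ := hσ
      rw [Finset.erase_insert (by simp [hfσ, hfg]), Finset.insert_erase hgσ]
    · intro σ hσ
      simp only [Finset.mem_filter] at hσ
      obtain ⟨_, hgσ, hfσ⟩ := hσ
      rw [Finset.erase_insert (by simp [hgσ, hfg.symm]), Finset.insert_erase hfσ]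
end

section
/- Let s : M_k → ℝ satisfy monotonicity with dominant set Ω, and suppose additionally the top-k inclusion values are attained: then the set of k elements with the k highest inclusion values IV(·) can be chosen to be Ω; formally, there is an ordering of I in which every element of Ω precedes every element of I \ Ω when sorted by IV in decreasing order (with ties broken appropriately), since min_{f∈Ω} IV(f) ≥ max_{g∉Ω} IV(g). -/
/-- Under monotonicity, the minimum inclusion value over Ω is at least the
maximum inclusion value outside Ω, so the top-k elements by inclusion value can
be taken to be Ω. -/
theorem min_IV_on_Omega_ge_max_IV_off (d k : ℕ) (hk : 1 ≤ k) (hkd : k < d)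
    (s : Finset (Fin d) → ℝ) (Ω : Finset (Fin d))
    (hΩ : Ω ∈ Finset.powersetCard k (Finset.univ : Finset (Fin d)))
    (mono : ∀ F ∈ Finset.powersetCard k (Finset.univ : Finset (Fin d)),
      ∀ F' ∈ Finset.powersetCard k (Finset.univ : Finset (Fin d)),
        F ∩ Ω ⊆ F' ∩ Ω → s F ≤ s F')
    (IV : Fin d → ℝ)
    (hIV : ∀ h : Fin d, IV h =
      (∑ σ ∈ (Finset.powersetCard k (Finset.univ : Finset (Fin d))).filter
          (fun σ => h ∈ σ), s σ) / ((d - 1).choose (k - 1)))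
    (hΩne : Ω.Nonempty) (hcne : Ωᶜ.Nonempty) :
    Ωᶜ.sup' hcne IV ≤ Ω.inf' hΩne IV := by
  have hden : (0:ℝ) < ((d-1).choose (k-1) : ℕ) := by
    exact_mod_cast Nat.choose_pos (by omega)
  apply Finset.sup'_le
  intro g hg
  apply Finset.le_inf'
  intro f hf
  have hgΩ : g ∉ Ω := Finset.mem_compl.mp hg
  have hfg : f ≠ g := fun h => hgΩ (h ▸ hf)
  set τ := Equiv.swap f g with hτ
  rw [hIV f, hIV g]
  apply div_le_div_of_nonneg_right ?_ hden.le
  have himg : ((Finset.powersetCard k (Finset.univ : Finset (Fin d))).filter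
      (fun σ => g ∈ σ)).image (fun σ => σ.map τ.toEmbedding)
      = (Finset.powersetCard k (Finset.univ : Finset (Fin d))).filter (fun σ => f ∈ σ) := by
    ext σ
    simp only [Finset.mem_image, Finset.mem_filter, Finset.mem_powersetCard_univ]
    constructor
    · rintro ⟨ρ, ⟨hcard, hgρ⟩, rfl⟩
      refine ⟨by simp [hcard], ?_⟩
      simp only [Finset.mem_map, Equiv.coe_toEmbedding]
      exact ⟨g, hgρ, Equiv.swap_apply_right f g⟩
    · rintro ⟨hcard, hfσ⟩
      refine ⟨σ.map τ.toEmbedding, ⟨by simp [hcard], ?_⟩, ?_⟩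
      · simp only [Finset.mem_map, Equiv.coe_toEmbedding]
        exact ⟨f, hfσ, Equiv.swap_apply_left f g⟩
      · ext x
        simp only [Finset.mem_map, Equiv.coe_toEmbedding]
        constructor
        · rintro ⟨a, ⟨b, hb, rfl⟩, rfl⟩
          simpa [hτ, Equiv.swap_apply_self] using hb
        · intro hx
          exact ⟨τ x, ⟨x, hx, rfl⟩, by simp [hτ, Equiv.swap_apply_self]⟩
  calc ∑ σ ∈ (Finset.powersetCard k (Finset.univ : Finset (Fin d))).filter
        (fun σ => g ∈ σ), s σ
      ≤ ∑ σ ∈ (Finset.powersetCard k (Finset.univ : Finset (Fin d))).filter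
        (fun σ => g ∈ σ), s (σ.map τ.toEmbedding) := by
        apply Finset.sum_le_sum
        intro σ hσ
        rw [Finset.mem_filter, Finset.mem_powersetCard_univ] at hσ
        obtain ⟨hcard, hgσ⟩ := hσ
        apply mono σ (by simp [Finset.mem_powersetCard_univ, hcard])
          (σ.map τ.toEmbedding) (by simp [Finset.mem_powersetCard_univ, hcard])
        intro x hx
        rw [Finset.mem_inter] at hx ⊢
        obtain ⟨hxσ, hxΩ⟩ := hx
        refine ⟨?_, hxΩ⟩
        simp only [Finset.mem_map, Equiv.coe_toEmbedding]
        by_cases hxf : x = f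
        · exact ⟨g, hgσ, by rw [hxf]; exact Equiv.swap_apply_right f g⟩
        · have hxg : x ≠ g := fun h => hgΩ (h ▸ hxΩ)
          exact ⟨x, hxσ, Equiv.swap_apply_of_ne_of_ne hxf hxg⟩
    _ = ∑ σ ∈ (Finset.powersetCard k (Finset.univ : Finset (Fin d))).filter
        (fun σ => f ∈ σ), s σ := by
        rw [← himg, Finset.sum_image]
        intro a _ b _ h
        exact Finset.map_injective _ h
end
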